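/- Let L > 0, C₁ > 0, C₂ > 0 be real numbers and q₁ < q₂ positive real numbers, and let h > 0. Set ħ₁ = (L/C₁)^{1/q₁}, ħ₂ = (L/C₂)^{1/q₂}, h* = (C₁/C₂)^{1/(q₂-q₁)}, and βᵢ = min(L, Cᵢ·h^{qᵢ}) for i = 1, 2. Let X₁ and X₂ be independent real random variables on a probability space (Ω, ℙ), with Xᵢ uniformly distributed on [0, βᵢ]. If h* ≥ max(ħ₁, ħ₂) and ħ₁ ≤ h ≤ ħ₂, then ℙ{X₁ ≤ X₂} = (1/2)·(h/ħ₂)^{q₂}. -/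

import Mathlib

open MeasureTheory ProbabilityTheory

lemma ofReal_max' (t : ℝ) : ENNReal.ofReal (max t 0) = ENNReal.ofReal t := by
  rcases le_or_gt t 0 with h | h
  · rw [max_eq_right h, ENNReal.ofReal_eq_zero.mpr h]; simp
  · rw [max_eq_left h.le]

lemma key_unif_prod (a b : ℝ) (ha : 0 < a) (hb : 0 < b) (hba : b ≤ a) :
    ((volume.withDensity (fun x => ENNReal.ofReal ((Set.Icc (0:ℝ) a).indicator (fun _ => 1/a) x))).prod
     (volume.withDensity (fun x => ENNReal.ofReal ((Set.Icc (0:ℝ) b).indicator (fun _ => 1/b) x))))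
     {p : ℝ × ℝ | p.1 ≤ p.2} = ENNReal.ofReal (b / (2*a)) := by
  have hS : MeasurableSet {p : ℝ × ℝ | p.1 ≤ p.2} :=
    measurableSet_le measurable_fst measurable_snd
  rw [Measure.prod_apply hS]
  have hinner : ∀ x : ℝ,
      (volume.withDensity (fun x => ENNReal.ofReal ((Set.Icc (0:ℝ) b).indicator (fun _ => 1/b) x)))
        (Prod.mk x ⁻¹' {p : ℝ × ℝ | p.1 ≤ p.2})
      = ENNReal.ofReal (1/b) * ENNReal.ofReal (b - max 0 x) := by
    intro x
    have hpre : Prod.mk x ⁻¹' {p : ℝ × ℝ | p.1 ≤ p.2} = Set.Ici x := rfl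
    rw [hpre, withDensity_apply _ measurableSet_Ici]
    have heq : (fun y : ℝ => ENNReal.ofReal ((Set.Icc (0:ℝ) b).indicator (fun _ => 1/b) y))
        = (Set.Icc (0:ℝ) b).indicator (fun _ => ENNReal.ofReal (1/b)) := by
      ext y
      by_cases hy : y ∈ Set.Icc (0:ℝ) b <;>
        simp [Set.indicator_of_mem, Set.indicator_of_notMem, hy]
    have hset : Set.Icc (0:ℝ) b ∩ Set.Ici x = Set.Icc (max 0 x) b := by
      ext y
      simp only [Set.mem_inter_iff, Set.mem_Icc, Set.mem_Ici, max_le_iff]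
      tauto
    rw [heq, lintegral_indicator_const measurableSet_Icc,
      Measure.restrict_apply measurableSet_Icc, hset, Real.volume_Icc]
  rw [lintegral_congr hinner]
  have hfm : Measurable (fun x : ℝ =>
      ENNReal.ofReal ((Set.Icc (0:ℝ) a).indicator (fun _ => 1/a) x)) :=
    (measurable_const.indicator measurableSet_Icc).ennreal_ofReal
  have hgm : Measurable (fun x : ℝ => ENNReal.ofReal (1/b) * ENNReal.ofReal (b - max 0 x)) :=
    ((measurable_const.sub (measurable_const.max measurable_id)).ennreal_ofReal).const_mul _
  rw [lintegral_withDensity_eq_lintegral_mul volume hfm hgm]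
  set F : ℝ → ℝ := (Set.Icc (0:ℝ) a).indicator (fun x => (1/a) * ((1/b) * max (b - max 0 x) 0))
    with hF
  have hpt : ∀ x : ℝ,
      ((fun x : ℝ => ENNReal.ofReal ((Set.Icc (0:ℝ) a).indicator (fun _ => 1/a) x)) *
       (fun x : ℝ => ENNReal.ofReal (1/b) * ENNReal.ofReal (b - max 0 x))) x
      = ENNReal.ofReal (F x) := by
    intro x
    by_cases hx : x ∈ Set.Icc (0:ℝ) a
    · simp only [Pi.mul_apply, hF, Set.indicator_of_mem hx]
      rw [ENNReal.ofReal_mul (by positivity), ENNReal.ofReal_mul (by positivity), ofReal_max']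
    · simp [Pi.mul_apply, hF, Set.indicator_of_notMem hx]
  rw [lintegral_congr hpt]
  have hcont : Continuous (fun x : ℝ => (1/a) * ((1/b) * max (b - max 0 x) 0)) := by
    fun_prop
  have hint : Integrable F volume :=
    (hcont.integrableOn_Icc).integrable_indicator measurableSet_Icc
  have hnn : 0 ≤ᵐ[volume] F := by
    refine Filter.Eventually.of_forall fun x => ?_
    apply Set.indicator_nonneg
    intro y _
    positivity
  rw [← ofReal_integral_eq_lintegral_ofReal hint hnn]
  congr 1
  rw [hF, MeasureTheory.integral_indicator measurableSet_Icc,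
    MeasureTheory.integral_Icc_eq_integral_Ioc,
    ← intervalIntegral.integral_of_le ha.le,
    intervalIntegral.integral_const_mul, intervalIntegral.integral_const_mul]
  have h1 : ∫ x in (0:ℝ)..b, max (b - max 0 x) 0 = b^2/2 := by
    have hc : ∀ x ∈ Set.uIcc (0:ℝ) b, max (b - max 0 x) 0 = b - x := by
      intro x hx
      rw [Set.uIcc_of_le hb.le] at hx
      obtain ⟨hx0, hxb⟩ := hx
      rw [max_eq_right hx0, max_eq_left (by linarith)]
    rw [intervalIntegral.integral_congr hc,
      intervalIntegral.integral_sub intervalIntegrable_const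
        (Continuous.intervalIntegrable continuous_id' 0 b)]
    simp
    ring
  have h2 : ∫ x in b..a, max (b - max 0 x) 0 = 0 := by
    have hc : ∀ x ∈ Set.uIcc b a, max (b - max 0 x) 0 = 0 := by
      intro x hx
      rw [Set.uIcc_of_le hba] at hx
      obtain ⟨hbx, hxa⟩ := hx
      rw [show (0:ℝ) ⊔ x = x from max_eq_right (by linarith), max_eq_right (by linarith)]
    rw [intervalIntegral.integral_congr hc, intervalIntegral.integral_zero]
  have hcont2 : Continuous (fun x : ℝ => max (b - max 0 x) 0) := by fun_prop
  have hadj : (∫ x in (0:ℝ)..b, max (b - max 0 x) 0) + ∫ x in b..a, max (b - max 0 x) 0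
      = ∫ x in (0:ℝ)..a, max (b - max 0 x) 0 :=
    intervalIntegral.integral_add_adjacent_intervals
      (hcont2.intervalIntegrable 0 b) (hcont2.intervalIntegrable b a)
  rw [← hadj, h1, h2]
  have ha0 : a ≠ 0 := ha.ne'
  have hb0 : b ≠ 0 := hb.ne'
  field_simp
  ring

/-- If h* ≥ max(ℏ₁,ℏ₂) and ℏ₁ ≤ h ≤ ℏ₂, then P{X₁ ≤ X₂} = (1/2)·(h/ℏ₂)^q₂. -/
theorem prob_dist_case1_middle
    {Ω : Type*} [MeasurableSpace Ω] (P : Measure Ω) [IsProbabilityMeasure P]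
    (L C₁ C₂ q₁ q₂ h : ℝ) (hL : 0 < L) (hC₁ : 0 < C₁) (hC₂ : 0 < C₂)
    (hq₁ : 0 < q₁) (hq : q₁ < q₂) (hh : 0 < h)
    (ℏ₁ ℏ₂ hstar β₁ β₂ : ℝ)
    (hℏ₁ : ℏ₁ = (L / C₁) ^ (1 / q₁)) (hℏ₂ : ℏ₂ = (L / C₂) ^ (1 / q₂))
    (hstar_def : hstar = (C₁ / C₂) ^ (1 / (q₂ - q₁)))
    (hβ₁ : β₁ = min L (C₁ * h ^ q₁)) (hβ₂ : β₂ = min L (C₂ * h ^ q₂))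
    (X₁ X₂ : Ω → ℝ) (hX₁ : Measurable X₁) (hX₂ : Measurable X₂)
    (hindep : IndepFun X₁ X₂ P)
    (hX₁unif : Measure.map X₁ P =
      volume.withDensity
        (fun x => ENNReal.ofReal ((Set.Icc (0:ℝ) β₁).indicator (fun _ => 1 / β₁) x)))
    (hX₂unif : Measure.map X₂ P =
      volume.withDensity
        (fun x => ENNReal.ofReal ((Set.Icc (0:ℝ) β₂).indicator (fun _ => 1 / β₂) x)))
    (hcase : max ℏ₁ ℏ₂ ≤ hstar) (hrange₁ : ℏ₁ ≤ h) (hrange₂ : h ≤ ℏ₂) :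
    P {ω | X₁ ω ≤ X₂ ω} = ENNReal.ofReal ((1/2) * (h / ℏ₂) ^ q₂) := by
  have hq₂ : 0 < q₂ := hq₁.trans hq
  have hLC₁ : (0:ℝ) < L / C₁ := div_pos hL hC₁
  have hLC₂ : (0:ℝ) < L / C₂ := div_pos hL hC₂
  have hβ₁L : β₁ = L := by
    rw [hβ₁, min_eq_left]
    have h1 : ((L / C₁) ^ (1/q₁) : ℝ) ^ q₁ ≤ h ^ q₁ :=
      Real.rpow_le_rpow (Real.rpow_nonneg hLC₁.le _) (hℏ₁ ▸ hrange₁) hq₁.le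
    rw [← Real.rpow_mul hLC₁.le, one_div_mul_cancel hq₁.ne', Real.rpow_one] at h1
    rw [mul_comm]
    exact (div_le_iff₀ hC₁).mp h1
  have hble : C₂ * h ^ q₂ ≤ L := by
    have h1 : h ^ q₂ ≤ ((L / C₂) ^ (1/q₂) : ℝ) ^ q₂ :=
      Real.rpow_le_rpow hh.le (hℏ₂ ▸ hrange₂) hq₂.le
    rw [← Real.rpow_mul hLC₂.le, one_div_mul_cancel hq₂.ne', Real.rpow_one] at h1
    rw [mul_comm]
    exact (le_div_iff₀ hC₂).mp h1
  have hβ₂b : β₂ = C₂ * h ^ q₂ := by rw [hβ₂, min_eq_right hble]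
  have hbpos : 0 < C₂ * h ^ q₂ := by positivity
  have hS : MeasurableSet {p : ℝ × ℝ | p.1 ≤ p.2} :=
    measurableSet_le measurable_fst measurable_snd
  have hmap : P.map (fun ω => (X₁ ω, X₂ ω)) = (P.map X₁).prod (P.map X₂) :=
    (indepFun_iff_map_prod_eq_prod_map_map hX₁.aemeasurable hX₂.aemeasurable).mp hindep
  have hPeq : P {ω | X₁ ω ≤ X₂ ω}
      = (P.map (fun ω => (X₁ ω, X₂ ω))) {p : ℝ × ℝ | p.1 ≤ p.2} := by
    rw [Measure.map_apply (hX₁.prodMk hX₂) hS]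
    rfl
  rw [hPeq, hmap, hX₁unif, hX₂unif, hβ₁L, hβ₂b,
    key_unif_prod L (C₂ * h ^ q₂) hL hbpos hble]
  congr 1
  rw [hℏ₂, Real.div_rpow hh.le (Real.rpow_nonneg hLC₂.le _), ← Real.rpow_mul hLC₂.le,
    one_div_mul_cancel hq₂.ne', Real.rpow_one]
  have hL0 : L ≠ 0 := hL.ne'
  have hC20 : C₂ ≠ 0 := hC₂.ne'
  field_simp
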